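/- Let k be a positive integer. If X is an S(k-1)-space (with S(0)-space meaning T1), then |X| ≤ 2^{s_{2k-1}(X)·ψ_{2k-1}(X)}. -/

import Mathlib

open Cardinal Set

universe u

variable {X : Type u}

/-- `x` is S(n)-separated from `A`. -/
def SSep [TopologicalSpace X] : ℕ → X → Set X → Prop
  | 0, x, A => x ∉ closure A
  | (n+1), x, A => ∃ U : ℕ → Set X, (∀ i ≤ n, IsOpen (U i)) ∧ x ∈ U 0 ∧
      (∀ i < n, closure (U i) ⊆ U (i+1)) ∧ closure (U n) ∩ A = ∅

/-- `X` is an S(n)-space. -/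
def SSpace (n : ℕ) (X : Type u) [TopologicalSpace X] : Prop :=
  ∀ x y : X, x ≠ y → SSep n x {y}

/-- `U` is an S(2k-1)-neighborhood of `x` (for `k ≥ 1`). -/
def SOddNhd [TopologicalSpace X] (k : ℕ) (x : X) (U : Set X) : Prop :=
  ∃ V : ℕ → Set X, (∀ i < k, IsOpen (V i)) ∧ x ∈ V 0 ∧
    (∀ i, i + 1 < k → closure (V i) ⊆ V (i+1)) ∧ V (k-1) ⊆ U

/-- `U` is an S(2k)-neighborhood of `x` (for `k ≥ 1`). -/
def SEvenNhd [TopologicalSpace X] (k : ℕ) (x : X) (U : Set X) : Prop :=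
  ∃ V : ℕ → Set X, (∀ i < k, IsOpen (V i)) ∧ x ∈ V 0 ∧
    (∀ i, i + 1 < k → closure (V i) ⊆ V (i+1)) ∧ closure (V (k-1)) ⊆ U

/-- `U` is an open S(2k-1)-neighborhood of `x`. -/
def SOpenNhd [TopologicalSpace X] (k : ℕ) (x : X) (U : Set X) : Prop :=
  IsOpen U ∧ SOddNhd k x U

/-- `U` is an S(2k-1)-open set. -/
def SOpen [TopologicalSpace X] (k : ℕ) (U : Set X) : Prop :=
  IsOpen U ∧ ∃ x, SOddNhd k x U

/-- The S(2k-1)-closure `θ_{2k-1}(A)`. -/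
def thetaOdd [TopologicalSpace X] (k : ℕ) (A : Set X) : Set X :=
  {x | ∀ U : Set X, SOpenNhd k x U → (U ∩ A).Nonempty}

/-- The S(2k)-closure `θ_{2k}(A)`. -/
def thetaEven [TopologicalSpace X] (k : ℕ) (A : Set X) : Set X :=
  {x | ∀ U : Set X, SOpenNhd k x U → (closure U ∩ A).Nonempty}

/-- `D` is S(2k-1)-discrete. -/
def SOddDiscrete [TopologicalSpace X] (k : ℕ) (D : Set X) : Prop :=
  ∀ x ∈ D, ∃ U : Set X, SOpenNhd k x U ∧ U ∩ D = {x}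

/-- `D` is S(2k)-discrete. -/
def SEvenDiscrete [TopologicalSpace X] (k : ℕ) (D : Set X) : Prop :=
  ∀ x ∈ D, ∃ U : Set X, SOpenNhd k x U ∧ closure U ∩ D = {x}

/-- The S(2k-1)-spread `s_{2k-1}(X)`. -/
noncomputable def spreadOdd (k : ℕ) (X : Type u) [TopologicalSpace X] : Cardinal :=
  (⨆ D : {D : Set X // SOddDiscrete k D}, #D.1) ⊔ Cardinal.aleph0

/-- The S(2k)-spread `s_{2k}(X)`. -/
noncomputable def spreadEven (k : ℕ) (X : Type u) [TopologicalSpace X] : Cardinal :=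
  (⨆ D : {D : Set X // SEvenDiscrete k D}, #D.1) ⊔ Cardinal.aleph0

/-- The S(2k-1)-cellularity `c_{2k-1}(X)`. -/
noncomputable def cellOdd (k : ℕ) (X : Type u) [TopologicalSpace X] : Cardinal :=
  (⨆ F : {F : Set (Set X) // (∀ U ∈ F, SOpen k U ∧ U.Nonempty) ∧
      (∀ U ∈ F, ∀ V ∈ F, U ≠ V → U ∩ V = ∅)}, #F.1) ⊔ Cardinal.aleph0

/-- The S(2k)-cellularity `c_{2k}(X)`. -/
noncomputable def cellEven (k : ℕ) (X : Type u) [TopologicalSpace X] : Cardinal :=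
  (⨆ F : {F : Set (Set X) // (∀ U ∈ F, SOpen k U ∧ U.Nonempty) ∧
      (∀ U ∈ F, ∀ V ∈ F, U ≠ V → closure U ∩ closure V = ∅)}, #F.1) ⊔ Cardinal.aleph0

/-- The S(2k-1)-character `χ_{2k-1}(X)`. -/
noncomputable def charOdd (k : ℕ) (X : Type u) [TopologicalSpace X] : Cardinal :=
  sInf {c | Cardinal.aleph0 ≤ c ∧ ∀ x : X, ∃ B : Set (Set X), #B ≤ c ∧
    (∀ U ∈ B, SOpenNhd k x U) ∧
    ∀ U : Set X, SOpenNhd k x U → ∃ V ∈ B, V ⊆ U}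

/-- The S(2k)-character `χ_{2k}(X)`. -/
noncomputable def charEven (k : ℕ) (X : Type u) [TopologicalSpace X] : Cardinal :=
  sInf {c | Cardinal.aleph0 ≤ c ∧ ∀ x : X, ∃ B : Set (Set X), #B ≤ c ∧
    (∀ V ∈ B, IsClosed V ∧ SOddNhd k x V) ∧
    ∀ W : Set X, SOpenNhd k x W → ∃ V ∈ B, V ⊆ closure W}

/-- The S(2k-1)-pseudocharacter `ψ_{2k-1}(X)`. -/
noncomputable def psiOdd (k : ℕ) (X : Type u) [TopologicalSpace X] : Cardinal :=
  sInf {c | Cardinal.aleph0 ≤ c ∧ ∀ x : X, ∃ B : Set (Set X), #B ≤ c ∧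
    (∀ U ∈ B, SOpenNhd k x U) ∧ ⋂₀ B = {x}}

/-- The S(2k)-pseudocharacter `ψ_{2k}(X)`. -/
noncomputable def psiEven (k : ℕ) (X : Type u) [TopologicalSpace X] : Cardinal :=
  sInf {c | Cardinal.aleph0 ≤ c ∧ ∀ x : X, ∃ B : Set (Set X), #B ≤ c ∧
    (∀ U ∈ B, SOpenNhd k x U) ∧ (⋂ U ∈ B, closure U) = {x}}

/-- The usual pseudocharacter `ψ(X)`. -/
noncomputable def psi (X : Type u) [TopologicalSpace X] : Cardinal :=
  sInf {c | Cardinal.aleph0 ≤ c ∧ ∀ x : X, ∃ B : Set (Set X), #B ≤ c ∧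
    (∀ U ∈ B, IsOpen U) ∧ ⋂₀ B = {x}}

section ER
open Ordinal


lemma er_pairs {κ : Cardinal.{u}} {Z C : Type u} (hκ : ℵ₀ ≤ κ) (hC : #C ≤ κ)
    (hZ : (2:Cardinal)^κ < #Z) (F : Z → Z → C) (hF : ∀ a b, F a b = F b a) :
    ∃ (H : Set Z) (c : C), κ < #H ∧ ∀ x ∈ H, ∀ y ∈ H, x ≠ y → F x y = c := by
  classical
  have h2κ : ℵ₀ ≤ (2:Cardinal)^κ := hκ.trans (cantor κ).le
  have hpow : ((2:Cardinal)^κ)^κ = 2^κ := by rw [← Cardinal.power_mul, Cardinal.mul_eq_self hκ]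
  have hZne : Nonempty Z := Cardinal.mk_ne_zero_iff.mp ((Cardinal.zero_le _).trans_lt hZ).ne'
  obtain ⟨z0⟩ := hZne
  -- witness function
  let w : (D : Set Z) → (D → C) → Z := fun D φ =>
    if h : ∃ x, x ∉ D ∧ ∀ d : D, F d x = φ d then h.choose else z0
  have hw : ∀ (D : Set Z) (φ : D → C), (∃ x, x ∉ D ∧ ∀ d : D, F d x = φ d) →
      w D φ ∉ D ∧ ∀ d : D, F d (w D φ) = φ d := by
    intro D φ h
    simp only [w, dif_pos h]
    exact h.choose_spec
  -- one closure step
  let step : Set Z → Set Z := fun S =>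
    S ∪ (Set.range fun p : (Σ D : {D : Set Z // D ⊆ S ∧ #D ≤ κ}, ((D.1 : Set Z) → C)) =>
      w p.1.1 p.2)
  have harrow : ∀ D : Set Z, #D ≤ κ → #(D → C) ≤ (2:Cardinal)^κ := by
    intro D hD
    rw [← Cardinal.power_def]
    calc #C ^ #D ≤ ((2:Cardinal)^κ) ^ #D :=
          Cardinal.power_le_power_right (hC.trans (Cardinal.cantor κ).le)
      _ ≤ ((2:Cardinal)^κ) ^ κ :=
          Cardinal.power_le_power_left (Cardinal.power_ne_zero κ two_ne_zero) hD
      _ = 2^κ := hpow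
  have hstep : ∀ S : Set Z, #S ≤ 2^κ → #(step S) ≤ 2^κ := by
    intro S hS
    have h1 : #{D : Set Z // D ⊆ S ∧ #D ≤ κ} ≤ (2:Cardinal)^κ := by
      refine (Cardinal.mk_bounded_subset_le S κ).trans ?_
      calc max #S ℵ₀ ^ κ ≤ ((2:Cardinal)^κ)^κ :=
            Cardinal.power_le_power_right (max_le hS h2κ)
        _ = 2^κ := hpow
    have h3 : #(Σ D : {D : Set Z // D ⊆ S ∧ #D ≤ κ}, ((D.1 : Set Z) → C)) ≤ (2:Cardinal)^κ := by
      rw [Cardinal.mk_sigma]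
      calc Cardinal.sum (fun D : {D : Set Z // D ⊆ S ∧ #D ≤ κ} => #((D.1 : Set Z) → C))
          ≤ Cardinal.sum (fun _ : {D : Set Z // D ⊆ S ∧ #D ≤ κ} => (2:Cardinal)^κ) :=
            Cardinal.sum_le_sum _ _ (fun D => harrow D.1 D.2.2)
        _ = #{D : Set Z // D ⊆ S ∧ #D ≤ κ} * (2:Cardinal)^κ := Cardinal.sum_const' _ _
        _ ≤ (2:Cardinal)^κ * (2:Cardinal)^κ := mul_le_mul_left h1 _
        _ = 2^κ := Cardinal.mul_eq_self h2κ
    refine (Cardinal.mk_union_le _ _).trans ?_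
    refine le_trans (add_le_add hS (Cardinal.mk_range_le.trans h3)) ?_
    exact (Cardinal.add_eq_self h2κ).le
  -- the tower
  have wfO : WellFounded ((· < ·) : (Order.succ κ).ord.ToType → _ → Prop) := wellFounded_lt
  have hObound : ∀ (S : Set (Order.succ κ).ord.ToType), #S ≤ κ → ∃ a, ∀ b ∈ S, b < a := by
    intro S h
    by_contra hcon
    push_neg at hcon
    have hc := Order.cof_le (s := S) hcon
    rw [Ordinal.cof_toType, (Cardinal.isRegular_succ hκ).cof_eq] at hc
    exact (Order.lt_succ κ).not_ge (hc.trans h)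
  have hIio : ∀ α : (Order.succ κ).ord.ToType, #{β // β < α} ≤ κ := by
    intro α
    exact Order.lt_succ_iff.mp (mk_Iio_ord_toType α)
  let Y : (Order.succ κ).ord.ToType → Set Z :=
    wfO.fix (fun α ih => ⋃ β : {β // β < α}, step (ih β.1 β.2))
  have hYeq : ∀ α, Y α = ⋃ β : {β // β < α}, step (Y β.1) := fun α => wfO.fix_eq _ α
  let T : Set Z := ⋃ α, step (Y α)
  have hstepT : ∀ α, step (Y α) ⊆ T := fun α => subset_iUnion (fun α => step (Y α)) α
  have hYcard : ∀ α, #(Y α) ≤ (2:Cardinal)^κ := by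
    intro α
    induction α using wfO.induction with
    | _ α ih =>
      rw [hYeq α]
      refine (mk_iUnion_le_sum_mk).trans ?_
      calc Cardinal.sum (fun β : {β // β < α} => #(step (Y β.1)))
          ≤ Cardinal.sum (fun _ : {β // β < α} => (2:Cardinal)^κ) :=
            Cardinal.sum_le_sum _ _ (fun β => hstep _ (ih β.1 β.2))
        _ = #{β // β < α} * (2:Cardinal)^κ := Cardinal.sum_const' _ _
        _ ≤ (2:Cardinal)^κ * (2:Cardinal)^κ :=
            mul_le_mul_left ((hIio α).trans (cantor κ).le) _
        _ = 2^κ := Cardinal.mul_eq_self h2κ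
  have hTcard : #T ≤ (2:Cardinal)^κ := by
    refine (mk_iUnion_le_sum_mk).trans ?_
    calc Cardinal.sum (fun α => #(step (Y α)))
        ≤ Cardinal.sum (fun _ : (Order.succ κ).ord.ToType => (2:Cardinal)^κ) :=
          Cardinal.sum_le_sum _ _ (fun α => hstep _ (hYcard α))
      _ = #((Order.succ κ).ord.ToType) * (2:Cardinal)^κ := Cardinal.sum_const' _ _
      _ ≤ (2:Cardinal)^κ * (2:Cardinal)^κ := by
          refine mul_le_mul_left ?_ _
          rw [mk_ord_toType]
          exact Order.succ_le_of_lt (Cardinal.cantor κ)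
      _ = 2^κ := Cardinal.mul_eq_self h2κ
  -- closure property of T
  have hclo : ∀ D : Set Z, D ⊆ T → #D ≤ κ → ∀ y : Z, y ∉ D →
      ∃ v, v ∈ T ∧ v ∉ D ∧ ∀ d ∈ D, F d v = F d y := by
    intro D hDT hDκ y hy
    have hidx : ∀ d : D, ∃ α, (d : Z) ∈ step (Y α) := fun d => mem_iUnion.mp (hDT d.2)
    choose idx hidx using hidx
    obtain ⟨γ, hγ⟩ := hObound (Set.range idx) (mk_range_le.trans hDκ)
    have hDY : D ⊆ Y γ := by
      intro d hd
      rw [hYeq γ]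
      exact mem_iUnion.mpr ⟨⟨idx ⟨d, hd⟩, hγ _ (mem_range_self _)⟩, hidx ⟨d, hd⟩⟩
    have hex : ∃ v, v ∉ D ∧ ∀ d : D, F d v = (fun d : D => F d y) d := ⟨y, hy, fun d => rfl⟩
    obtain ⟨hw1, hw2⟩ := hw D _ hex
    refine ⟨w D (fun d : D => F d y), ?_, hw1, fun d hd => hw2 ⟨d, hd⟩⟩
    exact hstepT γ (Or.inr ⟨⟨⟨D, hDY, hDκ⟩, fun d : D => F d y⟩, rfl⟩)
  -- a point outside T
  obtain ⟨y0, hy0⟩ : ∃ y : Z, y ∉ T := by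
    by_contra hcon
    push_neg at hcon
    have : #Z ≤ #T := by
      rw [← Cardinal.mk_univ (α := Z)]
      exact Cardinal.mk_le_mk_of_subset (fun z _ => hcon z)
    exact (hZ.trans_le this).not_ge hTcard
  -- the recursion
  let body : (α : (Order.succ κ).ord.ToType) → (∀ β, β < α → Z) → Z := fun α ih =>
    if h : ∃ v, v ∈ T ∧ v ∉ Set.range (fun β : {β // β < α} => ih β.1 β.2) ∧
        ∀ d ∈ Set.range (fun β : {β // β < α} => ih β.1 β.2), F d v = F d y0
    then h.choose else z0
  let x : (Order.succ κ).ord.ToType → Z := wfO.fix body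
  have hxeq : ∀ α, x α = body α (fun β _ => x β) := fun α => wfO.fix_eq body α
  have key : ∀ α, x α ∈ T ∧ x α ∉ Set.range (fun β : {β // β < α} => x β.1) ∧
      ∀ d ∈ Set.range (fun β : {β // β < α} => x β.1), F d (x α) = F d y0 := by
    intro α
    induction α using wfO.induction with
    | _ α ih =>
      have hDT : Set.range (fun β : {β // β < α} => x β.1) ⊆ T := by
        rintro _ ⟨β, rfl⟩; exact (ih β.1 β.2).1
      have hyD : y0 ∉ Set.range (fun β : {β // β < α} => x β.1) := fun hmem => hy0 (hDT hmem)
      have hex := hclo _ hDT (mk_range_le.trans (hIio α)) y0 hyD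
      have hxa : x α = hex.choose := by
        rw [hxeq α]
        exact dif_pos hex
      rw [hxa]
      exact hex.choose_spec
  have hxinj : Function.Injective x := by
    intro a b hab
    by_contra hne
    rcases lt_or_gt_of_ne hne with hlt | hlt
    · exact (key b).2.1 ⟨⟨a, hlt⟩, hab⟩
    · exact (key a).2.1 ⟨⟨b, hlt⟩, hab.symm⟩
  -- a big fiber
  obtain ⟨c, hc⟩ : ∃ c : C, κ < #{α // F (x α) y0 = c} := by
    by_contra hcon
    push_neg at hcon
    have h1 : #((Order.succ κ).ord.ToType) =
        Cardinal.sum (fun c : C => #{α // F (x α) y0 = c}) := by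
      rw [← Cardinal.mk_sigma]
      exact Cardinal.mk_congr (Equiv.sigmaFiberEquiv (fun α => F (x α) y0)).symm
    have h2 : Cardinal.sum (fun c : C => #{α // F (x α) y0 = c}) ≤ #C * κ :=
      (Cardinal.sum_le_sum _ _ hcon).trans_eq (Cardinal.sum_const' _ _)
    have h3 : Order.succ κ ≤ κ := by
      calc Order.succ κ = #((Order.succ κ).ord.ToType) := (mk_ord_toType _).symm
        _ ≤ #C * κ := h1.le.trans h2
        _ ≤ κ * κ := mul_le_mul_left hC _
        _ = κ := Cardinal.mul_eq_self hκ
    exact (Order.lt_succ κ).not_ge h3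
  refine ⟨x '' {α | F (x α) y0 = c}, c, ?_, ?_⟩
  · rwa [Cardinal.mk_image_eq_of_injOn _ _ hxinj.injOn]
  · rintro _ ⟨a, ha, rfl⟩ _ ⟨b, hb, rfl⟩ hne
    have hne' : a ≠ b := fun h => hne (by rw [h])
    rcases hne'.lt_or_gt with hlt | hlt
    · exact ((key b).2.2 (x a) ⟨⟨a, hlt⟩, rfl⟩).trans ha
    · rw [hF]
      exact ((key a).2.2 (x b) ⟨⟨b, hlt⟩, rfl⟩).trans hb
end ER
section TopoAux
open Ordinal

lemma sOddNhd_mem [TopologicalSpace X] {k : ℕ} (hk : 1 ≤ k) {x : X} {U : Set X}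
    (h : SOddNhd k x U) : x ∈ U := by
  obtain ⟨V, hopen, hx, hchain, hsub⟩ := h
  have hmono : ∀ i, i ≤ k - 1 → x ∈ V i := by
    intro i
    induction i with
    | zero => intro _; exact hx
    | succ n ihn =>
      intro hi
      have hn : n ≤ k - 1 := Nat.le_of_succ_le hi
      have h1 : n + 1 < k := by omega
      exact hchain n h1 (subset_closure (ihn hn))
  exact hsub (hmono _ le_rfl)

lemma sOpenNhd_mem [TopologicalSpace X] {k : ℕ} (hk : 1 ≤ k) {x : X} {U : Set X}
    (h : SOpenNhd k x U) : x ∈ U := sOddNhd_mem hk h.2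

lemma sOpenNhd_univ [TopologicalSpace X] (k : ℕ) (x : X) : SOpenNhd k x univ :=
  ⟨isOpen_univ, fun _ => univ, fun _ _ => isOpen_univ, mem_univ x,
    fun _ _ => subset_univ _, subset_rfl⟩

lemma sOpenNhd_inter [TopologicalSpace X] {k : ℕ} {x : X} {U U' : Set X}
    (h : SOpenNhd k x U) (h' : SOpenNhd k x U') : SOpenNhd k x (U ∩ U') := by
  obtain ⟨hUo, V, hVo, hxV, hVc, hVs⟩ := h
  obtain ⟨hU'o, V', hV'o, hxV', hV'c, hV's⟩ := h'
  refine ⟨hUo.inter hU'o, fun i => V i ∩ V' i, fun i hi => (hVo i hi).inter (hV'o i hi),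
    ⟨hxV, hxV'⟩, fun i hi z hz => ?_, inter_subset_inter hVs hV's⟩
  exact ⟨hVc i hi ((closure_mono inter_subset_left) hz),
    hV'c i hi ((closure_mono inter_subset_right) hz)⟩

lemma sspace_t1 [TopologicalSpace X] {n : ℕ} (hn : 1 ≤ n) (h : SSpace n X) (y : X) :
    IsOpen ({y}ᶜ : Set X) := by
  rw [isOpen_iff_forall_mem_open]
  intro x hx
  obtain ⟨m, rfl⟩ : ∃ m, n = m + 1 := ⟨n - 1, by omega⟩
  obtain ⟨U, hUo, hxU, hUc, hUe⟩ := h x y (by simpa using hx)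
  refine ⟨U 0, ?_, hUo 0 (Nat.zero_le _), hxU⟩
  have hsub : ∀ i, i ≤ m → U 0 ⊆ U i := by
    intro i
    induction i with
    | zero => intro _; exact subset_rfl
    | succ j ihj =>
      intro hi
      exact (ihj (by omega)).trans ((subset_closure).trans (hUc j (by omega)))
  intro z hz
  simp only [mem_compl_iff, mem_singleton_iff]
  rintro rfl
  have h2 : z ∈ closure (U m) ∩ ({z} : Set X) := ⟨subset_closure (hsub m le_rfl hz), rfl⟩
  rw [hUe] at h2
  exact h2

lemma sspace_sep [TopologicalSpace X] {k : ℕ} (hk : 1 ≤ k) (h : SSpace (k-1) X)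
    {x y : X} (hxy : x ≠ y) : ∃ U : Set X, SOpenNhd k x U ∧ y ∉ U := by
  rcases Nat.lt_or_ge k 2 with hk2 | hk2
  · have hk1 : k = 1 := by omega
    subst hk1
    have hxc : x ∉ closure ({y} : Set X) := h x y hxy
    refine ⟨(closure {y})ᶜ, ⟨isClosed_closure.isOpen_compl, fun _ => (closure {y})ᶜ,
      fun _ _ => isClosed_closure.isOpen_compl, hxc,
      fun i hi => absurd hi (by omega), subset_rfl⟩, ?_⟩
    exact fun hy => hy (subset_closure rfl)
  · obtain ⟨m, rfl⟩ : ∃ m, k = m + 2 := ⟨k - 2, by omega⟩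
    have hT1 : ∀ z : X, IsOpen ({z}ᶜ : Set X) := sspace_t1 (by omega) h
    obtain ⟨U, hUo, hxU, hUc, hUe⟩ := h x y hxy
    have hclm : closure (U m) ⊆ ({y}ᶜ : Set X) := by
      intro z hz
      simp only [mem_compl_iff, mem_singleton_iff]
      rintro rfl
      have h2 : z ∈ closure (U m) ∩ ({z} : Set X) := ⟨hz, rfl⟩
      rw [hUe] at h2
      exact h2
    refine ⟨{y}ᶜ, ⟨hT1 y, fun i => if i ≤ m then U i else {y}ᶜ, ?_, ?_, ?_, ?_⟩, ?_⟩
    · intro i hi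
      by_cases him : i ≤ m
      · simpa [him] using hUo i him
      · simpa [him] using hT1 y
    · simpa [Nat.zero_le m] using hxU
    · intro i hi
      by_cases him : i < m
      · have h1 : i ≤ m := him.le
        have h2 : i + 1 ≤ m := him
        simp only [if_pos h1, if_pos h2]
        exact hUc i him
      · have h1 : i = m := by omega
        rw [h1]
        simp only [if_pos (le_refl m), if_neg (by omega : ¬ m + 1 ≤ m)]
        exact hclm
    · have hr : m + 2 - 1 = m + 1 := rfl
      rw [hr]
      simp only [if_neg (by omega : ¬ m + 1 ≤ m)]
      exact subset_rfl
    · simp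

lemma psiOdd_set_nonempty (k : ℕ) (hk : 1 ≤ k) (X : Type u) [TopologicalSpace X]
    (h : SSpace (k-1) X) :
    {c | Cardinal.aleph0 ≤ c ∧ ∀ x : X, ∃ B : Set (Set X), #B ≤ c ∧
      (∀ U ∈ B, SOpenNhd k x U) ∧ ⋂₀ B = {x}}.Nonempty := by
  refine ⟨max ((2:Cardinal)^#X) ℵ₀, le_max_right _ _, fun x => ⟨{U | SOpenNhd k x U}, ?_, fun U hU => hU, ?_⟩⟩
  · refine le_trans (Cardinal.mk_subtype_le _) ?_
    rw [Cardinal.mk_set]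
    exact le_max_left _ _
  · ext z
    simp only [mem_sInter, mem_setOf_eq, mem_singleton_iff]
    constructor
    · intro hz
      by_contra hne
      obtain ⟨U, hU, hzU⟩ := sspace_sep hk h (Ne.symm hne)
      exact hzU (hz U hU)
    · rintro rfl
      exact fun U hU => sOpenNhd_mem hk hU

end TopoAux
theorem stmt11 (k : ℕ) (hk : 1 ≤ k) (X : Type u) [TopologicalSpace X]
    (h : SSpace (k - 1) X) :
    #X ≤ 2 ^ (spreadOdd k X * psiOdd k X) := by
  classical
  by_contra hlt
  push_neg at hlt
  have hsetne := psiOdd_set_nonempty k hk X h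
  have hψmem : psiOdd k X ∈ {c | Cardinal.aleph0 ≤ c ∧ ∀ x : X, ∃ B : Set (Set X), #B ≤ c ∧
      (∀ U ∈ B, SOpenNhd k x U) ∧ ⋂₀ B = {x}} := csInf_mem hsetne
  obtain ⟨hψ0, hB⟩ := hψmem
  have hs0 : ℵ₀ ≤ spreadOdd k X := le_sup_right
  set κ := spreadOdd k X * psiOdd k X with hκdef
  have hsκ : spreadOdd k X ≤ κ := by
    calc spreadOdd k X = spreadOdd k X * 1 := (mul_one _).symm
      _ ≤ κ := mul_le_mul_right (Cardinal.one_le_aleph0.trans hψ0) _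
  have hψκ : psiOdd k X ≤ κ := by
    calc psiOdd k X = 1 * psiOdd k X := (one_mul _).symm
      _ ≤ κ := mul_le_mul_left (Cardinal.one_le_aleph0.trans hs0) _
  have hκ0 : ℵ₀ ≤ κ := hs0.trans hsκ
  have hI : #κ.out = κ := Cardinal.mk_out κ
  have hIne : Nonempty κ.out := Cardinal.mk_ne_zero_iff.mp
    (by rw [hI]; exact ((Cardinal.aleph0_pos).trans_le hκ0).ne')
  -- build indexed pseudobases
  have hVex : ∀ x : X, ∃ V : κ.out → Set X,
      (∀ i, SOpenNhd k x (V i)) ∧ (⋂ i, V i) = {x} := by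
    intro x
    obtain ⟨B, hBc, hBn, hBi⟩ := hB x
    have hB'n : ∀ U ∈ insert Set.univ B, SOpenNhd k x U := by
      rintro U (rfl | hU)
      · exact sOpenNhd_univ k x
      · exact hBn U hU
    have hB'i : ⋂₀ insert Set.univ B = ({x} : Set X) := by
      rw [sInter_insert, hBi, univ_inter]
    have hB'c : #(insert Set.univ B : Set (Set X)) ≤ #κ.out := by
      rw [hI]
      refine le_trans Cardinal.mk_insert_le ?_
      refine le_trans (add_le_add hBc (Cardinal.one_le_aleph0.trans hψ0)) ?_
      rw [Cardinal.add_eq_self hψ0]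
      exact hψκ
    obtain ⟨f⟩ := (Cardinal.le_def _ _).mp hB'c
    set V0 : κ.out → Set X := fun i =>
      if hex : ∃ b : ↥(insert Set.univ B : Set (Set X)), f b = i then (hex.choose : Set X)
      else Set.univ with hV0def
    have hprop : ∀ i, SOpenNhd k x (V0 i) := by
      intro i
      by_cases hex : ∃ b : ↥(insert Set.univ B : Set (Set X)), f b = i
      · have : V0 i = (hex.choose : Set X) := dif_pos hex
        rw [this]
        exact hB'n _ hex.choose.2
      · have : V0 i = Set.univ := dif_neg hex
        rw [this]
        exact sOpenNhd_univ k x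
    refine ⟨V0, hprop, subset_antisymm ?_ ?_⟩
    · intro z hz
      rw [← hB'i]
      intro U hU
      have h1 : ∃ b : ↥(insert Set.univ B : Set (Set X)), f b = f ⟨U, hU⟩ := ⟨⟨U, hU⟩, rfl⟩
      have h2 := mem_iInter.mp hz (f ⟨U, hU⟩)
      have h3 : V0 (f ⟨U, hU⟩) = (h1.choose : Set X) := dif_pos h1
      have h4 : h1.choose = ⟨U, hU⟩ := f.injective h1.choose_spec
      rw [h3, h4] at h2
      exact h2
    · rw [singleton_subset_iff]
      exact mem_iInter.mpr fun i => sOpenNhd_mem hk (hprop i)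
  choose V hV1 hV2 using hVex
  have hpex : ∀ x y : X, ∃ i : κ.out, x ≠ y → y ∉ V x i := by
    intro x y
    by_cases hxy : x = y
    · exact ⟨Classical.arbitrary κ.out, fun hne => absurd hxy hne⟩
    · have hy : y ∉ (⋂ i, V x i) := by
        rw [hV2 x]
        exact fun hy => hxy (mem_singleton_iff.mp hy).symm
      obtain ⟨i, hi⟩ : ∃ i, y ∉ V x i := by simpa [mem_iInter] using hy
      exact ⟨i, fun _ => hi⟩
  choose p hp using hpex
  let F : X → X → κ.out × κ.out := fun a b =>
    if WellOrderingRel a b then (p a b, p b a) else (p b a, p a b)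
  have hFsymm : ∀ a b, F a b = F b a := by
    intro a b
    rcases eq_or_ne a b with rfl | hne
    · rfl
    · rcases trichotomous_of WellOrderingRel a b with hab | heq | hba
      · exact ((if_pos hab).trans (if_neg (asymm hab)).symm :
          F a b = F b a)
      · exact absurd heq hne
      · exact ((if_neg (asymm hba)).trans (if_pos hba).symm :
          F a b = F b a)
  have hCcard : #(κ.out × κ.out) ≤ κ := by
    have hpq : #(κ.out × κ.out) = κ * κ := by
      rw [Cardinal.mk_prod]
      simp only [Cardinal.lift_id, hI]
    rw [hpq, Cardinal.mul_eq_self hκ0]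
  obtain ⟨H, c, hHc, hhom⟩ := er_pairs hκ0 hCcard hlt F hFsymm
  have hdisc : SOddDiscrete k H := by
    intro a ha
    refine ⟨V a c.1 ∩ V a c.2, sOpenNhd_inter (hV1 a c.1) (hV1 a c.2), subset_antisymm ?_ ?_⟩
    · rintro z ⟨⟨hz1, hz2⟩, hzH⟩
      by_contra hz
      have hza : z ≠ a := fun he => hz (by rw [he]; exact mem_singleton _)
      have hne : a ≠ z := hza.symm
      have hF := hhom a ha z hzH hne
      by_cases hrel : WellOrderingRel a z
      · have hFz : F a z = (p a z, p z a) := if_pos hrel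
        rw [hFz] at hF
        have h1 : p a z = c.1 := congrArg Prod.fst hF
        exact (h1 ▸ hp a z hne) hz1
      · have hFz : F a z = (p z a, p a z) := if_neg hrel
        rw [hFz] at hF
        have h1 : p a z = c.2 := congrArg Prod.snd hF
        exact (h1 ▸ hp a z hne) hz2
    · rw [singleton_subset_iff]
      exact ⟨⟨sOpenNhd_mem hk (hV1 a c.1), sOpenNhd_mem hk (hV1 a c.2)⟩, ha⟩
  have hHs : #H ≤ spreadOdd k X := by
    refine le_trans ?_ le_sup_left
    exact le_ciSup (Cardinal.bddAbove_range _) (⟨H, hdisc⟩ : {D : Set X // SOddDiscrete k D})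
  exact absurd (hHc.trans_le (hHs.trans hsκ)) (lt_irrefl κ)
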